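/- arXiv:1610.09270 — 2 statements merged into one kernel-verified Lean document; each statement's English description precedes it below -/
import Mathlib

section
/- For all subsets A, B, C of M: if A ⫝c_C B (C covers A in B) then A ⫝e_C B. -/
open FirstOrder

/-- Covering independence: `A ⫝c_C B` ("`C` covers `A` in `B`") in the `L`-structure `M`. -/
def IndC (L : Language) (M : Type*) [L.Structure M] (A C B : Set M) : Prop :=
  ∀ (k m n : ℕ) (φ : L.Formula (Fin k ⊕ Fin m ⊕ Fin n))
    (a : Fin k → M) (b : Fin m → M) (c : Fin n → M),
    (∀ i, a i ∈ A) → (∀ i, b i ∈ B) → (∀ i, c i ∈ C) →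
    ∃ d : Fin m → M, (∀ i, d i ∈ C) ∧
      (φ.Realize (Sum.elim a (Sum.elim b c)) → φ.Realize (Sum.elim a (Sum.elim d c)))

/-- The model-theoretic algebraic closure of `A` in `M`. -/
def acl (L : Language) (M : Type*) [L.Structure M] (A : Set M) : Set M :=
  {b | ∃ (n : ℕ) (φ : L.Formula (Unit ⊕ Fin n)) (a : Fin n → M),
    (∀ i, a i ∈ A) ∧ φ.Realize (Sum.elim (fun _ => b) a) ∧
    {u : M | φ.Realize (Sum.elim (fun _ => u) a)}.Finite}

/-- Exchange independence: `A ⫝e_C B` iff for every finite tuple `ā` from `A`,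
`A ∩ acl(ā ∪ B ∪ C) ⊆ acl(ā ∪ C)`. -/
def IndE (L : Language) (M : Type*) [L.Structure M] (A C B : Set M) : Prop :=
  ∀ (n : ℕ) (a : Fin n → M), (∀ i, a i ∈ A) →
    A ∩ acl L M (Set.range a ∪ B ∪ C) ⊆ acl L M (Set.range a ∪ C)

open Classical in
theorem stmt15 (L : Language) (M : Type*) [L.Structure M] :
    ∀ A C B : Set M, IndC L M A C B → IndE L M A C B := by
  intro A C B h n a ha x hx
  obtain ⟨hxA, N, φ, e, he, hre, hfin⟩ := hx
  by_cases hallkept : ∀ i, e i ∈ Set.range a ∪ C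
  · exact ⟨N, φ, e, hallkept, hre, hfin⟩
  push_neg at hallkept
  obtain ⟨i₀, hi₀⟩ := hallkept
  have hb₀ : e i₀ ∈ B := by
    rcases he i₀ with (h' | h') | h'
    · exact absurd (Or.inl h') hi₀
    · exact h'
    · exact absurd (Or.inr h') hi₀
  by_cases hC : C = ∅
  · exfalso
    obtain ⟨d, hd, -⟩ := h 0 1 0 ⊥ Fin.elim0 (fun _ => e i₀) Fin.elim0
      (fun i => i.elim0) (fun _ => hb₀) (fun i => i.elim0)
    rw [hC] at hd
    exact (hd 0).elim
  obtain ⟨c₀, hc₀⟩ := Set.nonempty_iff_ne_empty.2 hC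
  -- classification
  set inA : Fin N → Prop := fun i => e i ∈ Set.range a with hinA
  set kept : Fin N → Prop := fun i => e i ∈ Set.range a ∪ C with hkept
  have hinA_kept : ∀ i, inA i → kept i := fun i hi => Or.inl hi
  -- tuples
  set a' : Fin (N + 1) → M := Fin.cons x (fun i => if inA i then e i else x) with ha'
  set b' : Fin N → M := fun i => if kept i then e i₀ else e i with hb'
  set c' : Fin N → M := fun i => if kept i ∧ ¬ inA i then e i else c₀ with hc'
  -- variable relabeling
  set ρ : Unit ⊕ Fin N → (Fin (N + 1) ⊕ Fin N ⊕ Fin N) :=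
    Sum.elim (fun _ => Sum.inl 0)
      (fun i => if inA i then Sum.inl i.succ
        else if kept i then Sum.inr (Sum.inr i) else Sum.inr (Sum.inl i)) with hρ
  -- cardinality bound
  set K := hfin.toFinset.card with hK
  set vs₀ : Fin K → M := fun j => ((hfin.toFinset.equivFin.symm j : hfin.toFinset) : M) with hvs₀
  -- formulas
  set g : Unit ⊕ Fin N → ((Fin (N + 1) ⊕ Fin N ⊕ Fin N) ⊕ Fin K) ⊕ Unit :=
    Sum.elim (fun _ => Sum.inr ()) (fun i => Sum.inl (Sum.inl (ρ (Sum.inr i)))) with hg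
  set χ : L.Formula (((Fin (N + 1) ⊕ Fin N ⊕ Fin N) ⊕ Fin K) ⊕ Unit) :=
    (φ.relabel g).imp (Language.BoundedFormula.iSup fun j : Fin K =>
      Language.Term.equal (Language.Term.var (Sum.inr ())) (Language.Term.var (Sum.inl (Sum.inr j)))) with hχ
  set ψ : L.Formula (Fin (N + 1) ⊕ Fin N ⊕ Fin N) :=
    (φ.relabel ρ) ⊓ ((χ.iAlls Unit).iExs (Fin K)) with hψ
  -- environments
  have key : ∀ (w : Fin N → M),
      (Sum.elim a' (Sum.elim w c')) ∘ ρ ∘ Sum.inr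
        = fun i => if inA i then e i else if kept i then e i else w i := by
    intro w
    funext i
    by_cases h1 : inA i
    · simp [hρ, h1, ha', Fin.cons_succ]
    · by_cases h2 : kept i
      · simp [hρ, h1, h2, hc']
      · simp [hρ, h1, h2]

  have hBmem : ∀ i, ¬ kept i → e i ∈ B := by
    intro i hk
    rcases he i with (h' | h') | h'
    · exact absurd (Or.inl h') hk
    · exact h'
    · exact absurd (Or.inr h') hk
  have envA : ∀ w : Fin N → M, Sum.elim a' (Sum.elim w c') (ρ (Sum.inl ())) = x := by
    intro w; simp [hρ, ha']
  have envρ : ∀ i, Sum.elim a' (Sum.elim b' c') (ρ (Sum.inr i)) = e i := by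
    intro i
    by_cases h1 : inA i
    · simp [hρ, h1, ha', Fin.cons_succ]
    · by_cases h2 : kept i
      · simp [hρ, h1, h2, hc']
      · simp [hρ, h1, h2, hb']
  have env1 : (Sum.elim a' (Sum.elim b' c')) ∘ ρ = Sum.elim (fun _ => x) e := by
    funext t
    rcases t with u | i
    · exact envA b'
    · exact envρ i
  -- helper for the inner environments
  have envg : ∀ (w : Fin N → M) (vs : Fin K → M) (us : Unit → M),
      (fun t => Sum.elim (fun s => Sum.elim (Sum.elim a' (Sum.elim w c')) vs (id s)) us (id t)) ∘ g
        = Sum.elim (fun _ => us ()) (fun i => Sum.elim a' (Sum.elim w c') (ρ (Sum.inr i))) := by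
    intro w vs us
    funext t
    rcases t with u | i
    · rfl
    · rfl
  have hrψ : ψ.Realize (Sum.elim a' (Sum.elim b' c')) := by
    rw [hψ]
    rw [Language.Formula.realize_inf]
    constructor
    · rw [Language.Formula.realize_relabel, env1]
      exact hre
    · rw [Language.Formula.realize_iExs]
      refine ⟨vs₀, ?_⟩
      rw [Language.Formula.realize_iAlls]
      intro us
      rw [hχ, Language.Formula.realize_imp, Language.Formula.realize_relabel]
      intro hu
      erw [envg b' vs₀ us] at hu
      have hu' : φ.Realize (Sum.elim (fun _ => us ()) e) := by
        convert hu using 2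
        funext i
        exact (envρ i).symm
      have hmem : us () ∈ hfin.toFinset := hfin.mem_toFinset.2 hu'
      refine (Language.BoundedFormula.realize_iSup).2
        ⟨hfin.toFinset.equivFin ⟨us (), hmem⟩, ?_⟩
      show Language.Formula.Realize _ _
      rw [Language.Formula.realize_equal]
      simp [hvs₀]
  have ha'' : ∀ i, a' i ∈ A := by
    intro i
    refine Fin.cases ?_ ?_ i
    · simpa [ha'] using hxA
    · intro j
      by_cases hj : inA j
      · rw [ha']
        simp only [Fin.cons_succ, if_pos hj]
        obtain ⟨t, ht⟩ := hj
        exact ht ▸ ha t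
      · rw [ha']
        simp only [Fin.cons_succ, if_neg hj]
        exact hxA
  have hb'' : ∀ i, b' i ∈ B := by
    intro i
    rw [hb']
    by_cases hk : kept i
    · simp only [if_pos hk]; exact hb₀
    · simp only [if_neg hk]; exact hBmem i hk
  have hc'' : ∀ i, c' i ∈ C := by
    intro i
    rw [hc']
    by_cases hk : kept i ∧ ¬ inA i
    · simp only [if_pos hk]
      rcases hk.1 with h' | h'
      · exact absurd h' hk.2
      · exact h'
    · simp only [if_neg hk]; exact hc₀
  obtain ⟨d, hd, himp⟩ := h (N + 1) N N ψ a' b' c' ha'' hb'' hc''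
  have hrψ' := himp hrψ
  rw [hψ, Language.Formula.realize_inf] at hrψ'
  obtain ⟨hr1, hr2⟩ := hrψ'
  set e' : Fin N → M := fun i => if kept i then e i else d i with he'
  have envρ' : ∀ i, Sum.elim a' (Sum.elim d c') (ρ (Sum.inr i)) = e' i := by
    intro i
    by_cases h1 : inA i
    · simp [hρ, h1, ha', Fin.cons_succ, he', hinA_kept i h1]
    · by_cases h2 : kept i
      · simp [hρ, h1, h2, hc', he']
      · simp [hρ, h1, h2, he']
  have env2 : (Sum.elim a' (Sum.elim d c')) ∘ ρ = Sum.elim (fun _ => x) e' := by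
    funext t
    rcases t with u | i
    · exact envA d
    · exact envρ' i
  refine ⟨N, φ, e', ?_, ?_, ?_⟩
  · intro i
    rw [he']
    by_cases hk : kept i
    · simp only [if_pos hk]; exact hk
    · simp only [if_neg hk]
      exact Or.inr (hd i)
  · rw [Language.Formula.realize_relabel, env2] at hr1
    exact hr1
  · rw [Language.Formula.realize_iExs] at hr2
    obtain ⟨vs, hvs⟩ := hr2
    rw [Language.Formula.realize_iAlls] at hvs
    refine Set.Finite.subset (Set.finite_range vs) ?_
    intro u hu
    have := hvs (fun _ => u)
    erw [hχ, Language.Formula.realize_imp, Language.Formula.realize_relabel,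
      envg d vs (fun _ => u)] at this
    have h2 : φ.Realize (Sum.elim (fun _ => (u : M))
        fun i => Sum.elim a' (Sum.elim d c') (ρ (Sum.inr i))) := by
      have hu2 : φ.Realize (Sum.elim (fun _ => (u : M)) e') := hu
      convert hu2 using 2
      funext i
      exact envρ' i
    have h3 := this h2
    obtain ⟨j, hj⟩ := (Language.BoundedFormula.realize_iSup).1 h3
    have hj' := (Language.Formula.realize_equal).1 hj
    simp only [Language.Term.realize_var, Sum.elim_inr, Sum.elim_inl, id_eq] at hj'
    exact ⟨j, hj'.symm⟩
end

section
/- For all countable subsets A, B, C of 𝓛, the set {ω ∈ Ω : A(ω) ⫝e_{C(ω)} B(ω)} is measurable, where ⫝e denotes exchange independence in the structure M. -/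
open FirstOrder

namespace Stmt18Aux

open FirstOrder.Language Set

variable {L : Language} {M : Type*} [L.Structure M]

lemma countable_sigma_formula [Countable L.Symbols] (α : Type*) [Countable α] :
    Countable (Σ n, L.BoundedFormula α n) := by
  haveI h1 : Countable (Σ l, L.Functions l) := Language.Countable.countable_functions
  haveI h2 : Countable (Σ l, L.Relations l) :=
    Function.Injective.countable (f := fun x : Σ l, L.Relations l =>
      (Sum.inr x : L.Symbols)) Sum.inr_injective
  exact Function.Injective.countable BoundedFormula.listEncode_sigma_injective

instance countable_formula [Countable L.Symbols] (α : Type*) [Countable α] :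
    Countable (L.Formula α) := by
  haveI := countable_sigma_formula (L := L) α
  exact Function.Injective.countable
    (f := fun φ : L.Formula α => (⟨0, φ⟩ : Σ n, L.BoundedFormula α n))
    (fun φ ψ h => by simpa using h)

variable {m : ℕ}

/-- Formula expressing "there exist `k+1` distinct solutions `u` of `φ(u, v̄)`". -/
noncomputable def exFml (φ : L.Formula (Unit ⊕ Fin m)) (k : ℕ) : L.Formula (Fin m) :=
  ((BoundedFormula.iInf
      (fun i : Fin (k + 1) => (BoundedFormula.relabel (Sum.elim (fun _ => Sum.inr i) Sum.inl) φ :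
        L.BoundedFormula (Fin m) (k + 1)))) ⊓
    (BoundedFormula.iInf
      (fun p : {p : Fin (k + 1) × Fin (k + 1) // p.1 ≠ p.2} =>
        ∼((Term.var (Sum.inr p.1.1)).bdEqual (Term.var (Sum.inr p.1.2)))))).exs

lemma realize_relabel_aux (φ : L.Formula (Unit ⊕ Fin m)) {k : ℕ} (i : Fin (k + 1))
    (v : Fin m → M) (xs : Fin (k + 1) → M) :
    BoundedFormula.Realize (L := L) (M := M)
      (BoundedFormula.relabel (Sum.elim (fun _ => Sum.inr i) Sum.inl) φ :
        L.BoundedFormula (Fin m) (k + 1)) v xs ↔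
      φ.Realize (Sum.elim (fun _ => xs i) v) := by
  rw [BoundedFormula.realize_relabel]
  have hfun : (Sum.elim v (xs ∘ Fin.castAdd 0) ∘
      (Sum.elim (fun _ => Sum.inr i) Sum.inl : Unit ⊕ Fin m → Fin m ⊕ Fin (k + 1))) =
      Sum.elim (fun _ => xs i) v := funext fun x => by cases x <;> rfl
  rw [hfun]
  exact iff_of_eq (congrArg _ (Subsingleton.elim _ _))

lemma realize_exFml (φ : L.Formula (Unit ⊕ Fin m)) (k : ℕ) (v : Fin m → M) :
    (exFml φ k).Realize v ↔ ∃ xs : Fin (k + 1) → M, Function.Injective xs ∧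
      ∀ i, φ.Realize (Sum.elim (fun _ => xs i) v) := by
  rw [exFml, BoundedFormula.realize_exs]
  refine exists_congr fun xs => ?_
  rw [BoundedFormula.realize_inf, BoundedFormula.realize_iInf, BoundedFormula.realize_iInf,
    and_comm]
  constructor
  · rintro ⟨hd, hs⟩
    refine ⟨fun i j hij => ?_, fun i => ?_⟩
    · by_contra hne
      have := hd ⟨(i, j), hne⟩
      simp only [BoundedFormula.realize_not, BoundedFormula.realize_bdEqual,
        Term.realize_var, Sum.elim_inr] at this
      exact this hij
    · exact (realize_relabel_aux φ i v xs).1 (hs i)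
  · rintro ⟨hinj, hs⟩
    refine ⟨fun p => ?_, fun i => ?_⟩
    · have hp := p.2
      simp only [BoundedFormula.realize_not, BoundedFormula.realize_bdEqual, Term.realize_var,
        Sum.elim_inr]
      exact fun h => hp (hinj h)
    · exact (realize_relabel_aux φ i v xs).2 (hs i)

lemma finite_iff (φ : L.Formula (Unit ⊕ Fin m)) (v : Fin m → M) :
    {u : M | φ.Realize (Sum.elim (fun _ => u) v)}.Finite ↔
      ∃ k, ¬ (exFml φ k).Realize v := by
  classical
  simp only [realize_exFml]
  constructor
  · intro hS
    refine ⟨hS.toFinset.card, ?_⟩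
    rintro ⟨xs, hinj, hsol⟩
    have hsub : Finset.univ.image xs ⊆ hS.toFinset := fun x hx => by
      simp only [Finset.mem_image, Finset.mem_univ, true_and] at hx
      obtain ⟨i, rfl⟩ := hx
      exact hS.mem_toFinset.2 (hsol i)
    have := Finset.card_le_card hsub
    rw [Finset.card_image_of_injective _ hinj, Finset.card_univ, Fintype.card_fin] at this
    omega
  · rintro ⟨k, hk⟩
    by_contra hinf
    obtain e := Set.Infinite.natEmbedding _ hinf
    refine hk ⟨fun i => (e i : M), ?_, fun i => (e i).2⟩
    intro i j hij
    exact Fin.ext (by exact_mod_cast e.injective (Subtype.ext hij))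

lemma mem_acl_iff (b : M) (X : Set M) :
    b ∈ acl L M X ↔ ∃ (m : ℕ) (φ : L.Formula (Unit ⊕ Fin m)) (a : Fin m → M),
      (∀ i, a i ∈ X) ∧ ∃ k, φ.Realize (Sum.elim (fun _ => b) a) ∧
        ¬ (exFml φ k).Realize a := by
  unfold acl
  simp only [Set.mem_setOf_eq, finite_iff]
  tauto

variable {Ω : Type*} [MeasurableSpace Ω]

omit [MeasurableSpace Ω] in
lemma event_eq (g : Ω → M) (T : Set (Ω → M)) :
    {ω | g ω ∈ acl L M ((fun f => f ω) '' T)} =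
      ⋃ (m : ℕ) (φ : L.Formula (Unit ⊕ Fin m)) (h : Fin m → T) (k : ℕ),
        {ω | φ.Realize (Sum.elim (fun _ => g ω) fun i => (h i : Ω → M) ω) ∧
          ¬ (exFml φ k).Realize (fun i => (h i : Ω → M) ω)} := by
  ext ω
  simp only [Set.mem_setOf_eq, Set.mem_iUnion, mem_acl_iff]
  constructor
  · rintro ⟨m, φ, a, ha, k, h1, h2⟩
    have hch : ∀ i, ∃ t : T, (t : Ω → M) ω = a i := fun i => by
      obtain ⟨f, hf, hfa⟩ := ha i; exact ⟨⟨f, hf⟩, hfa⟩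
    choose h hh using hch
    have heq : (fun i => (h i : Ω → M) ω) = a := funext hh
    exact ⟨m, φ, h, k, by rw [heq]; exact h1, by rw [heq]; exact h2⟩
  · rintro ⟨m, φ, h, k, h1, h2⟩
    exact ⟨m, φ, fun i => (h i : Ω → M) ω, fun i => ⟨h i, (h i).2, rfl⟩, k, h1, h2⟩

lemma meas_piece (𝓛 : Set (Ω → M))
    (hmeas : ∀ (n : ℕ) (φ : L.Formula (Fin n)) (a : Fin n → Ω → M),
      (∀ i, a i ∈ 𝓛) → MeasurableSet {ω : Ω | φ.Realize (fun i => a i ω)})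
    (g : Ω → M) (hg : g ∈ 𝓛) (h : Fin m → Ω → M) (hh : ∀ i, h i ∈ 𝓛)
    (φ : L.Formula (Unit ⊕ Fin m)) (k : ℕ) :
    MeasurableSet {ω | φ.Realize (Sum.elim (fun _ => g ω) fun i => h i ω) ∧
      ¬ (exFml φ k).Realize (fun i => h i ω)} := by
  set ψ : L.Formula (Unit ⊕ Fin m) := φ ⊓ (Formula.relabel Sum.inr (exFml φ k).not) with hψ
  set θ : L.Formula (Fin (m + 1)) :=
    ψ.relabel (Sum.elim (fun _ => (0 : Fin (m + 1))) Fin.succ) with hθ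
  set a : Fin (m + 1) → Ω → M := Fin.cases g h with ha
  have key : {ω | φ.Realize (Sum.elim (fun _ => g ω) fun i => h i ω) ∧
      ¬ (exFml φ k).Realize (fun i => h i ω)} = {ω : Ω | θ.Realize (fun i => a i ω)} := by
    ext ω
    rw [Set.mem_setOf_eq, Set.mem_setOf_eq, hθ, Formula.realize_relabel]
    have hcomp : ((fun i => a i ω) ∘
        (Sum.elim (fun _ => (0 : Fin (m + 1))) Fin.succ : Unit ⊕ Fin m → Fin (m + 1))) =
        Sum.elim (fun _ => g ω) (fun i => h i ω) := by
      funext x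
      cases x with
      | inl u => simp [ha]
      | inr i => simp [ha]
    rw [hcomp, hψ, Formula.realize_inf, Formula.realize_relabel, Formula.realize_not,
      Sum.elim_comp_inr]
  rw [key]
  exact hmeas (m + 1) θ a (fun i => Fin.cases hg hh i)

lemma meas_acl [Countable L.Symbols] (𝓛 : Set (Ω → M))
    (hmeas : ∀ (n : ℕ) (φ : L.Formula (Fin n)) (a : Fin n → Ω → M),
      (∀ i, a i ∈ 𝓛) → MeasurableSet {ω : Ω | φ.Realize (fun i => a i ω)})
    (g : Ω → M) (hg : g ∈ 𝓛) (T : Set (Ω → M)) (hT : T ⊆ 𝓛) (hTc : T.Countable) :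
    MeasurableSet {ω | g ω ∈ acl L M ((fun f => f ω) '' T)} := by
  haveI := hTc.to_subtype
  rw [event_eq]
  exact MeasurableSet.iUnion fun m => MeasurableSet.iUnion fun φ =>
    MeasurableSet.iUnion fun h => MeasurableSet.iUnion fun k =>
      meas_piece 𝓛 hmeas g hg (fun i => (h i : Ω → M)) (fun i => hT (h i).2) φ k

end Stmt18Aux

open Stmt18Aux in
theorem stmt18 (L : Language) [Countable L.Symbols] (M : Type*) [L.Structure M]
    (Ω : Type*) [MeasurableSpace Ω] (𝓛 : Set (Ω → M))
    (hmeas : ∀ (n : ℕ) (φ : L.Formula (Fin n)) (a : Fin n → Ω → M),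
      (∀ i, a i ∈ 𝓛) → MeasurableSet {ω : Ω | φ.Realize (fun i => a i ω)}) :
    ∀ A B C : Set (Ω → M), A ⊆ 𝓛 → B ⊆ 𝓛 → C ⊆ 𝓛 →
      A.Countable → B.Countable → C.Countable →
      MeasurableSet {ω : Ω |
        IndE L M ((fun f => f ω) '' A) ((fun f => f ω) '' C) ((fun f => f ω) '' B)} := by
  intro A B C hA hB hC hAc hBc hCc
  haveI := hAc.to_subtype
  have main_eq : {ω : Ω |
      IndE L M ((fun f => f ω) '' A) ((fun f => f ω) '' C) ((fun f => f ω) '' B)} =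
      ⋂ (n : ℕ), ⋂ (f : Fin n → A), ⋂ (g : A),
        ({ω | (g : Ω → M) ω ∈ acl L M
            ((fun f' => f' ω) '' (Set.range (fun i => ((f i : Ω → M))) ∪ B ∪ C))}ᶜ ∪
          {ω | (g : Ω → M) ω ∈ acl L M
            ((fun f' => f' ω) '' (Set.range (fun i => ((f i : Ω → M))) ∪ C))}) := by
    ext ω
    simp only [Set.mem_setOf_eq, Set.mem_iInter, Set.mem_union, Set.mem_compl_iff,
      Set.image_union, ← Set.range_comp, Function.comp_def]
    constructor
    · intro hInd n f g
      rw [← imp_iff_not_or]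
      intro hmem
      exact hInd n (fun i => (f i : Ω → M) ω) (fun i => ⟨f i, (f i).2, rfl⟩)
        ⟨⟨(g : Ω → M), g.2, rfl⟩, hmem⟩
    · intro hIff n a ha x hx
      obtain ⟨hxA, hxacl⟩ := hx
      obtain ⟨gf, hgf, rfl⟩ := hxA
      have hch : ∀ i, ∃ t : A, (t : Ω → M) ω = a i := fun i => by
        obtain ⟨f, hf, hfa⟩ := ha i; exact ⟨⟨f, hf⟩, hfa⟩
      choose f hf using hch
      have hae : a = fun i => (f i : Ω → M) ω := (funext hf).symm
      subst hae
      rcases hIff n f ⟨gf, hgf⟩ with h1 | h2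
      · exact absurd hxacl h1
      · exact h2
  rw [main_eq]
  refine MeasurableSet.iInter fun n => MeasurableSet.iInter fun f =>
    MeasurableSet.iInter fun g => MeasurableSet.union ?_ ?_
  · refine (meas_acl 𝓛 hmeas (g : Ω → M) (hA g.2) _ ?_ ?_).compl
    · exact Set.union_subset (Set.union_subset
        (Set.range_subset_iff.2 fun i => hA (f i).2) hB) hC
    · exact ((Set.countable_range _).union hBc).union hCc
  · exact meas_acl 𝓛 hmeas (g : Ω → M) (hA g.2) _
      (Set.union_subset (Set.range_subset_iff.2 fun i => hA (f i).2) hC)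
      ((Set.countable_range _).union hCc)
end
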